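/- For every finite connected simple graph G with n vertices and at least one edge, there exists a finite connected simple graph G' with τ(G') = n + τ(G) and τ_c(G') = 2n. (One such G' is obtained from G by attaching, to each vertex v of G, a new path v–v'–v'' of two new vertices.) -/

import Mathlib

open SimpleGraph

/-- `C` is a vertex cover of `G`: every edge of `G` has an endpoint in `C`. -/
def IsVertexCover {V : Type} (G : SimpleGraph V) (C : Set V) : Prop :=
  ∀ ⦃u v : V⦄, G.Adj u v → u ∈ C ∨ v ∈ C

/-- `C` is a connected vertex cover of `G`: a vertex cover inducing a connected subgraph. -/
def IsConnectedVertexCover {V : Type} (G : SimpleGraph V) (C : Set V) : Prop :=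
  _root_.IsVertexCover G C ∧ (G.induce C).Connected

/-- The vertex cover number `τ(G)`. -/
noncomputable def tau {V : Type} (G : SimpleGraph V) : ℕ :=
  sInf {n | ∃ C : Set V, _root_.IsVertexCover G C ∧ C.ncard = n}

/-- The connected vertex cover number `τ_c(G)`. -/
noncomputable def tauc {V : Type} (G : SimpleGraph V) : ℕ :=
  sInf {n | ∃ C : Set V, IsConnectedVertexCover G C ∧ C.ncard = n}

/-- `G` with a pendant path `v – (v,1) – (v,2)` attached at each vertex `v ≅ (v,0)`. -/
def ext3 {V : Type} (G : SimpleGraph V) : SimpleGraph (V × Fin 3) where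
  Adj a b := (a.2 = 0 ∧ b.2 = 0 ∧ G.Adj a.1 b.1) ∨
    (a.1 = b.1 ∧ ((a.2 : ℕ) + 1 = (b.2 : ℕ) ∨ (b.2 : ℕ) + 1 = (a.2 : ℕ)))
  symm := by
    constructor
    rintro a b (⟨h1, h2, h3⟩ | ⟨h1, h2⟩)
    · exact Or.inl ⟨h2, h1, h3.symm⟩
    · exact Or.inr ⟨h1.symm, h2.symm⟩
  loopless := by
    constructor
    rintro a (⟨_, _, h⟩ | ⟨_, h⟩)
    · exact G.irrefl h
    · omega

lemma mkfin_inj {V : Type} (i : Fin 3) : Function.Injective (fun v : V => (v, i)) :=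
  fun a b h => by simpa using congrArg Prod.fst h

lemma walk_closed {V : Type} {G : SimpleGraph V} {S : Set V}
    (hS : ∀ a ∈ S, ∀ b, G.Adj a b → b ∈ S) :
    ∀ {a b : V}, G.Walk a b → a ∈ S → b ∈ S := by
  intro a b w
  induction w with
  | nil => exact id
  | cons h _ ih => exact fun ha => ih (hS _ ha _ h)

lemma ext3_connected {V : Type} [Fintype V] (G : SimpleGraph V) (hconn : G.Connected)
    (hedge : G.edgeSet.Nonempty) : (ext3 G).Connected := by
  classical
  have hex : ∃ u w : V, G.Adj u w := by
    obtain ⟨e, he⟩ := hedge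
    induction e using Sym2.ind with
    | _ x y => exact ⟨x, y, he⟩
  obtain ⟨u0, w0, hadj0⟩ := hex
  let ψ : G →g ext3 G := ⟨fun v => (v, 0), fun h => Or.inl ⟨rfl, rfl, h⟩⟩
  have reachbase : ∀ p : V × Fin 3, (ext3 G).Reachable p (p.1, 0) := by
    rintro ⟨v, i⟩
    fin_cases i
    · exact Reachable.refl _
    · exact (Adj.reachable (Or.inr ⟨rfl, by simp⟩))
    · exact (Adj.reachable (G := ext3 G) (u := (v,2)) (v := (v,1))
        (Or.inr ⟨rfl, by simp⟩)).trans (Adj.reachable (Or.inr ⟨rfl, by simp⟩))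
  rw [connected_iff]
  refine ⟨fun a b => ?_, ⟨(u0, 0)⟩⟩
  exact (reachbase a).trans (((hconn.preconnected a.1 b.1).map ψ).trans (reachbase b).symm)

lemma ext3_tau {V : Type} [Fintype V] (G : SimpleGraph V) :
    tau (ext3 G) = Fintype.card V + tau G := by
  classical
  have hex : {m | ∃ C : Set V, _root_.IsVertexCover G C ∧ C.ncard = m}.Nonempty :=
    ⟨(Set.univ : Set V).ncard, Set.univ, fun u v _ => Or.inl trivial, rfl⟩
  obtain ⟨C₀, hC₀, hC₀card⟩ : ∃ C : Set V, _root_.IsVertexCover G C ∧ C.ncard = tau G :=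
    Nat.sInf_mem hex
  -- the upper-bound cover
  set Cup : Set (V × Fin 3) :=
    (fun v : V => (v, (1 : Fin 3))) '' Set.univ ∪ (fun v : V => (v, (0 : Fin 3))) '' C₀ with hCup
  have hCupmem : ∀ p : V × Fin 3, p ∈ Cup ↔ (p.2 = 1 ∨ (p.2 = 0 ∧ p.1 ∈ C₀)) := by
    rintro ⟨a, b⟩
    constructor
    · rintro (⟨v, -, h⟩ | ⟨v, hv, h⟩)
      · rw [Prod.ext_iff] at h; exact Or.inl h.2.symm
      · rw [Prod.ext_iff] at h
        exact Or.inr ⟨h.2.symm, h.1 ▸ hv⟩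
    · rintro (h | ⟨h, hm⟩)
      · exact Or.inl ⟨a, trivial, Prod.ext_iff.mpr ⟨rfl, h.symm⟩⟩
      · exact Or.inr ⟨a, hm, Prod.ext_iff.mpr ⟨rfl, h.symm⟩⟩
  have hCupcover : _root_.IsVertexCover (ext3 G) Cup := by
    rintro ⟨a, b⟩ ⟨c, d⟩ (⟨h1, h2, h3⟩ | ⟨h1, h2⟩)
    · rcases hC₀ h3 with h | h
      · exact Or.inl ((hCupmem _).mpr (Or.inr ⟨h1, h⟩))
      · exact Or.inr ((hCupmem _).mpr (Or.inr ⟨h2, h⟩))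
    · have hb := b.isLt; have hd := d.isLt
      have h2' : (b : ℕ) + 1 = (d : ℕ) ∨ (d : ℕ) + 1 = (b : ℕ) := h2
      have h3 : (b : ℕ) = 1 ∨ (d : ℕ) = 1 := by omega
      rcases h3 with h3 | h3
      · exact Or.inl ((hCupmem _).mpr (Or.inl (Fin.val_injective h3)))
      · exact Or.inr ((hCupmem _).mpr (Or.inl (Fin.val_injective h3)))
  have hdisj : Disjoint ((fun v : V => (v, (1 : Fin 3))) '' Set.univ)
      ((fun v : V => (v, (0 : Fin 3))) '' C₀) := by
    rw [Set.disjoint_left]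
    rintro p ⟨v, -, rfl⟩ ⟨w, -, h⟩
    simpa using congrArg Prod.snd h
  have hCupcard : Cup.ncard = Fintype.card V + tau G := by
    rw [hCup, Set.ncard_union_eq hdisj (Set.toFinite _) (Set.toFinite _),
      Set.ncard_image_of_injective _ (mkfin_inj 1), Set.ncard_image_of_injective _ (mkfin_inj 0),
      Set.ncard_univ, Nat.card_eq_fintype_card, hC₀card]
  apply le_antisymm
  · exact Nat.sInf_le ⟨Cup, hCupcover, hCupcard⟩
  · show Fintype.card V + tau G ≤
      sInf {m | ∃ C : Set (V × Fin 3), _root_.IsVertexCover (ext3 G) C ∧ C.ncard = m}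
    apply le_csInf
    · exact ⟨Fintype.card V + tau G, Cup, hCupcover, hCupcard⟩
    rintro m ⟨C, hC, rfl⟩
    set D : Set V := {v | (v, (0 : Fin 3)) ∈ C} with hD
    have hDcover : _root_.IsVertexCover G D := fun u v h => hC (Or.inl ⟨rfl, rfl, h⟩)
    set f : V → V × Fin 3 := fun v => if (v, (1 : Fin 3)) ∈ C then (v, 1) else (v, 2) with hf
    have hfmem : ∀ v, f v ∈ C := by
      intro v
      by_cases h : (v, (1 : Fin 3)) ∈ C
      · simpa [hf, h]
      · have h2 := hC (show (ext3 G).Adj (v, 1) (v, 2) from Or.inr ⟨rfl, by simp⟩)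
        simp only [hf, if_neg h]
        tauto
    have hfsnd : ∀ v, (f v).2 ≠ 0 := by
      intro v
      by_cases h : (v, (1 : Fin 3)) ∈ C <;> simp [hf, h]
    have hffst : ∀ v, (f v).1 = v := by
      intro v
      by_cases h : (v, (1 : Fin 3)) ∈ C <;> simp [hf, h]
    have hfinj : Function.Injective f := by
      intro a b h
      rw [← hffst a, ← hffst b, h]
    have hdisj2 : Disjoint (f '' Set.univ) ((fun v : V => (v, (0 : Fin 3))) '' D) := by
      rw [Set.disjoint_left]
      rintro p ⟨v, -, rfl⟩ ⟨w, -, h⟩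
      exact hfsnd v (by rw [← h])
    have hsub : (f '' Set.univ ∪ (fun v : V => (v, (0 : Fin 3))) '' D) ⊆ C := by
      rintro p (⟨v, -, rfl⟩ | ⟨w, hw, rfl⟩)
      · exact hfmem v
      · exact hw
    have hDle : tau G ≤ D.ncard := Nat.sInf_le ⟨D, hDcover, rfl⟩
    calc Fintype.card V + tau G ≤ Fintype.card V + D.ncard := by omega
      _ = (f '' Set.univ ∪ (fun v : V => (v, (0 : Fin 3))) '' D).ncard := by
          rw [Set.ncard_union_eq hdisj2 (Set.toFinite _) (Set.toFinite _),
            Set.ncard_image_of_injective _ hfinj, Set.ncard_image_of_injective _ (mkfin_inj 0),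
            Set.ncard_univ, Nat.card_eq_fintype_card]
      _ ≤ C.ncard := Set.ncard_le_ncard hsub (Set.toFinite C)

lemma ext3_tauc {V : Type} [Fintype V] (G : SimpleGraph V) (hconn : G.Connected)
    (hedge : G.edgeSet.Nonempty) : tauc (ext3 G) = 2 * Fintype.card V := by
  classical
  have hex : ∃ u w : V, G.Adj u w := by
    obtain ⟨e, he⟩ := hedge
    induction e using Sym2.ind with
    | _ x y => exact ⟨x, y, he⟩
  obtain ⟨u0, w0, hadj0⟩ := hex
  have hne0 : u0 ≠ w0 := G.ne_of_adj hadj0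
  -- the candidate connected cover: the two lower layers
  set Cc : Set (V × Fin 3) :=
    (fun v : V => (v, (0 : Fin 3))) '' Set.univ ∪ (fun v : V => (v, (1 : Fin 3))) '' Set.univ
    with hCc
  have hCcmem : ∀ p : V × Fin 3, p ∈ Cc ↔ (p.2 = 0 ∨ p.2 = 1) := by
    rintro ⟨a, b⟩
    constructor
    · rintro (⟨v, -, h⟩ | ⟨v, -, h⟩)
      · rw [Prod.ext_iff] at h; exact Or.inl h.2.symm
      · rw [Prod.ext_iff] at h; exact Or.inr h.2.symm
    · rintro (h | h)
      · exact Or.inl ⟨a, trivial, Prod.ext_iff.mpr ⟨rfl, h.symm⟩⟩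
      · exact Or.inr ⟨a, trivial, Prod.ext_iff.mpr ⟨rfl, h.symm⟩⟩
  have hCccover : _root_.IsVertexCover (ext3 G) Cc := by
    rintro ⟨a, b⟩ ⟨c, d⟩ (⟨h1, h2, h3⟩ | ⟨h1, h2⟩)
    · exact Or.inl ((hCcmem _).mpr (Or.inl h1))
    · have hb := b.isLt; have hd := d.isLt
      have h2' : (b : ℕ) + 1 = (d : ℕ) ∨ (d : ℕ) + 1 = (b : ℕ) := h2
      have h3 : (b : ℕ) = 0 ∨ (b : ℕ) = 1 ∨ (d : ℕ) = 0 ∨ (d : ℕ) = 1 := by omega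
      rcases h3 with h3 | h3 | h3 | h3
      · exact Or.inl ((hCcmem _).mpr (Or.inl (Fin.val_injective h3)))
      · exact Or.inl ((hCcmem _).mpr (Or.inr (Fin.val_injective h3)))
      · exact Or.inr ((hCcmem _).mpr (Or.inl (Fin.val_injective h3)))
      · exact Or.inr ((hCcmem _).mpr (Or.inr (Fin.val_injective h3)))
  have hCcconn : ((ext3 G).induce Cc).Connected := by
    have hmem0 : ∀ v : V, ((v, (0 : Fin 3)) : V × Fin 3) ∈ Cc :=
      fun v => (hCcmem _).mpr (Or.inl rfl)
    let φ : G →g (ext3 G).induce Cc :=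
      ⟨fun v => ⟨(v, 0), hmem0 v⟩, fun h => Or.inl ⟨rfl, rfl, h⟩⟩
    have reachbase : ∀ x : ↥Cc, ((ext3 G).induce Cc).Reachable x ⟨(x.1.1, 0), hmem0 _⟩ := by
      rintro ⟨⟨v, i⟩, hp⟩
      rcases (hCcmem _).mp hp with h | h
      · cases h
        exact Reachable.refl _
      · cases h
        exact Adj.reachable (Or.inr ⟨rfl, by simp⟩)
    rw [connected_iff]
    refine ⟨fun a b => ?_, ⟨⟨(u0, 0), hmem0 u0⟩⟩⟩
    exact (reachbase a).trans (((hconn.preconnected a.1.1 b.1.1).map φ).trans (reachbase b).symm)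
  have hdisj : Disjoint ((fun v : V => (v, (0 : Fin 3))) '' Set.univ)
      ((fun v : V => (v, (1 : Fin 3))) '' Set.univ) := by
    rw [Set.disjoint_left]
    rintro p ⟨v, -, rfl⟩ ⟨w, -, h⟩
    simpa using congrArg Prod.snd h
  have hCccard : Cc.ncard = 2 * Fintype.card V := by
    rw [hCc, Set.ncard_union_eq hdisj (Set.toFinite _) (Set.toFinite _),
      Set.ncard_image_of_injective _ (mkfin_inj 0), Set.ncard_image_of_injective _ (mkfin_inj 1),
      Set.ncard_univ, Nat.card_eq_fintype_card]
    omega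
  apply le_antisymm
  · exact Nat.sInf_le ⟨Cc, ⟨hCccover, hCcconn⟩, hCccard⟩
  · show 2 * Fintype.card V ≤
      sInf {m | ∃ C : Set (V × Fin 3), IsConnectedVertexCover (ext3 G) C ∧ C.ncard = m}
    apply le_csInf
    · exact ⟨2 * Fintype.card V, Cc, ⟨hCccover, hCcconn⟩, hCccard⟩
    rintro m ⟨C, ⟨hCov, hConn⟩, rfl⟩
    -- pick a vertex different from any given one
    have hother : ∀ v : V, ∃ x : V, x ≠ v := by
      intro v
      rcases eq_or_ne u0 v with h | h
      · exact ⟨w0, fun hw => hne0 (h.trans hw.symm)⟩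
      · exact ⟨u0, h⟩
    have hpath : ∀ v : V, (ext3 G).Adj (v, (1 : Fin 3)) (v, (2 : Fin 3)) :=
      fun v => Or.inr ⟨rfl, by simp⟩
    -- every (v,1) belongs to C
    have h1mem : ∀ v : V, ((v, (1 : Fin 3)) : V × Fin 3) ∈ C := by
      intro v
      by_contra h1
      have h2 : ((v, (2 : Fin 3)) : V × Fin 3) ∈ C := (hCov (hpath v)).resolve_left h1
      obtain ⟨x0, hx0⟩ := hother v
      -- some vertex of C with first coordinate x0
      have hq : ∃ j : Fin 3, ((x0, j) : V × Fin 3) ∈ C := by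
        rcases hCov (hpath x0) with h | h
        · exact ⟨1, h⟩
        · exact ⟨2, h⟩
      obtain ⟨j, hqj⟩ := hq
      -- (v,2) is isolated in the induced graph
      have hS : ∀ a ∈ {x : ↥C | x.1 = ((v, (2 : Fin 3)) : V × Fin 3)},
          ∀ b, ((ext3 G).induce C).Adj a b →
            b ∈ {x : ↥C | x.1 = ((v, (2 : Fin 3)) : V × Fin 3)} := by
        rintro ⟨a, ha⟩ has ⟨b, hb⟩ hadj
        exfalso
        simp only [Set.mem_setOf_eq] at has
        subst has
        rcases hadj with ⟨hh, -, -⟩ | ⟨hh1, hh2⟩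
        · exact absurd hh (by simp)
        · have hblt := b.2.isLt
          have hh2' : ((2 : Fin 3) : ℕ) + 1 = (b.2 : ℕ) ∨ (b.2 : ℕ) + 1 = ((2 : Fin 3) : ℕ) := hh2
          have hb2 : (b.2 : ℕ) = 1 := by simp at hh2'; omega
          have hbeq : b = (v, (1 : Fin 3)) := by
            have : b.1 = v := hh1.symm
            rw [Prod.ext_iff]
            exact ⟨this, Fin.val_injective hb2⟩
          rw [hbeq] at hb
          exact h1 hb
      have := walk_closed hS
        (hConn.preconnected ⟨(v, 2), h2⟩ ⟨(x0, j), hqj⟩).some rfl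
      simp only [Set.mem_setOf_eq, Prod.ext_iff] at this
      exact hx0 this.1
    -- every (v,0) belongs to C
    have h0mem : ∀ v : V, ((v, (0 : Fin 3)) : V × Fin 3) ∈ C := by
      intro v
      by_contra h0
      obtain ⟨x0, hx0⟩ := hother v
      have hS : ∀ a ∈ {x : ↥C | x.1.1 = v ∧ x.1.2 ≠ 0},
          ∀ b, ((ext3 G).induce C).Adj a b → b ∈ {x : ↥C | x.1.1 = v ∧ x.1.2 ≠ 0} := by
        rintro ⟨a, ha⟩ has ⟨b, hb⟩ hadj
        simp only [Set.mem_setOf_eq] at has ⊢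
        rcases hadj with ⟨hh, -, -⟩ | ⟨hh1, -⟩
        · exact absurd hh has.2
        · refine ⟨hh1 ▸ has.1, fun hb0 => ?_⟩
          have : b = (v, (0 : Fin 3)) := by
            rw [Prod.ext_iff]
            exact ⟨(hh1 ▸ has.1 : b.1 = v), hb0⟩
          rw [this] at hb
          exact h0 hb
      have := walk_closed hS
        (hConn.preconnected ⟨(v, 1), h1mem v⟩ ⟨(x0, 1), h1mem x0⟩).some ⟨rfl, by simp⟩
      simp only [Set.mem_setOf_eq] at this
      exact hx0 this.1
    have hsub : Cc ⊆ C := by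
      intro p hp
      rcases (hCcmem p).mp hp with h | h
      · have : p = (p.1, (0 : Fin 3)) := Prod.ext_iff.mpr ⟨rfl, h⟩
        rw [this]; exact h0mem p.1
      · have : p = (p.1, (1 : Fin 3)) := Prod.ext_iff.mpr ⟨rfl, h⟩
        rw [this]; exact h1mem p.1
    calc 2 * Fintype.card V = Cc.ncard := hCccard.symm
      _ ≤ C.ncard := Set.ncard_le_ncard hsub (Set.toFinite C)

/-- For every finite connected graph `G` with `n` vertices and at least one edge,
there is a finite connected graph `G'` with `τ(G') = n + τ(G)` and `τ_c(G') = 2n`. -/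
theorem exists_fix_tauc {V : Type} [Fintype V] (G : SimpleGraph V)
    (hconn : G.Connected) (hedge : G.edgeSet.Nonempty) :
    ∃ (W : Type) (_ : Fintype W) (G' : SimpleGraph W),
      G'.Connected ∧ tau G' = Fintype.card V + tau G ∧
        tauc G' = 2 * Fintype.card V := by
  exact ⟨V × Fin 3, inferInstance, ext3 G, ext3_connected G hconn hedge,
    ext3_tau G, ext3_tauc G hconn hedge⟩
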